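/- Truth lemma for the canonical segment model: let Ax be a set of L-formulas and let M_{CK⊕Ax} be the canonical model whose worlds are all segments. Then for every segment (Γ, U) and every formula φ, we have M_{CK⊕Ax}, (Γ, U) ⊩ φ if and only if φ ∈ Γ. -/

import Mathlib

/-- Formulas of the modal language L. -/
inductive Form : Type
  | var : ℕ → Form
  | bot : Form
  | and : Form → Form → Form
  | or : Form → Form → Form
  | imp : Form → Form → Form
  | box : Form → Form
  | dia : Form → Form

namespace Form

/-- Negation abbreviation: ¬φ := φ → ⊥. -/
def neg (φ : Form) : Form := φ.imp bot

/-- Uniform substitution. -/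
def subst (σ : ℕ → Form) : Form → Form
  | var p => σ p
  | bot => bot
  | and a b => and (a.subst σ) (b.subst σ)
  | or a b => or (a.subst σ) (b.subst σ)
  | imp a b => imp (a.subst σ) (b.subst σ)
  | box a => box (a.subst σ)
  | dia a => dia (a.subst σ)

end Form

/-- Substitution instances of the axioms of a standard Hilbert axiomatisation
of intuitionistic propositional logic (the axioms are schematic, so all
substitution instances are included). -/
inductive IPLAx : Form → Prop
  | a1 (φ ψ : Form) : IPLAx (φ.imp (ψ.imp φ))
  | a2 (φ ψ χ : Form) : IPLAx ((φ.imp (ψ.imp χ)).imp ((φ.imp ψ).imp (φ.imp χ)))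
  | a3 (φ ψ : Form) : IPLAx ((φ.and ψ).imp φ)
  | a4 (φ ψ : Form) : IPLAx ((φ.and ψ).imp ψ)
  | a5 (φ ψ : Form) : IPLAx (φ.imp (ψ.imp (φ.and ψ)))
  | a6 (φ ψ : Form) : IPLAx (φ.imp (φ.or ψ))
  | a7 (φ ψ : Form) : IPLAx (ψ.imp (φ.or ψ))
  | a8 (φ ψ χ : Form) : IPLAx ((φ.imp χ).imp ((ψ.imp χ).imp ((φ.or ψ).imp χ)))
  | a9 (φ : Form) : IPLAx (Form.bot.imp φ)

/-- Substitution instances of K_□ : □(φ→ψ) → (□φ → □ψ). -/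
def KBoxAx (χ : Form) : Prop :=
  ∃ φ ψ : Form, χ = ((φ.imp ψ).box).imp ((φ.box).imp (ψ.box))

/-- Substitution instances of K_◇ : □(φ→ψ) → (◇φ → ◇ψ). -/
def KDiaAx (χ : Form) : Prop :=
  ∃ φ ψ : Form, χ = ((φ.imp ψ).box).imp ((φ.dia).imp (ψ.dia))

/-- Axiom instances available in the calculus CK ⊕ Ax : instances of IPL
axioms, of K_□, of K_◇, or substitution instances of members of Ax. -/
def AxInst (Ax : Set Form) (φ : Form) : Prop :=
  IPLAx φ ∨ KBoxAx φ ∨ KDiaAx φ ∨ ∃ ψ ∈ Ax, ∃ σ : ℕ → Form, φ = ψ.subst σ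

/-- The generalised Hilbert calculus CK ⊕ Ax deriving consecutions Γ ⊢_Ax φ:
rules (Ax), (MP), (Nec) and (El). -/
inductive Prv (Ax : Set Form) : Set Form → Form → Prop
  | ax {Γ : Set Form} {φ : Form} : AxInst Ax φ → Prv Ax Γ φ
  | mp {Γ : Set Form} {φ ψ : Form} : Prv Ax Γ φ → Prv Ax Γ (φ.imp ψ) → Prv Ax Γ ψ
  | nec {Γ : Set Form} {φ : Form} : Prv Ax ∅ φ → Prv Ax Γ φ.box
  | el {Γ : Set Form} {φ : Form} : φ ∈ Γ → Prv Ax Γ φ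

/-- A CK-frame (X, e, ≤, R): ≤ is a preorder, e is ≤-maximal (an "exploding"
world), and e R x iff x = e. -/
structure CKFrame where
  W : Type
  le : W → W → Prop
  R : W → W → Prop
  e : W
  le_refl : ∀ x : W, le x x
  le_trans : ∀ {x y z : W}, le x y → le y z → le x z
  e_max : ∀ {x : W}, le e x → x = e
  e_R : ∀ x : W, R e x ↔ x = e

/-- A valuation on a CK-frame: each variable gets a ≤-upset containing e. -/
structure Val (F : CKFrame) where
  V : ℕ → F.W → Prop
  mono : ∀ (p : ℕ) {x y : F.W}, F.le x y → V p x → V p y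
  at_e : ∀ p : ℕ, V p F.e

/-- The forcing relation M, x ⊩ φ of a CK-model (F, V). -/
def Forces (F : CKFrame) (V : Val F) : Form → F.W → Prop
  | .var p, x => V.V p x
  | .bot, x => x = F.e
  | .and a b, x => Forces F V a x ∧ Forces F V b x
  | .or a b, x => Forces F V a x ∨ Forces F V b x
  | .imp a b, x => ∀ y : F.W, F.le x y → Forces F V a y → Forces F V b y
  | .box a, x => ∀ y z : F.W, F.le x y → F.R y z → Forces F V a z
  | .dia a, x => ∀ y : F.W, F.le x y → ∃ z : F.W, F.R y z ∧ Forces F V a z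

/-- A frame validates the consecution Γ ⊢ φ if in every model on it, every
world forcing all of Γ forces φ. -/
def ValidConseq (F : CKFrame) (Γ : Set Form) (φ : Form) : Prop :=
  ∀ (V : Val F) (x : F.W), (∀ ψ ∈ Γ, Forces F V ψ x) → Forces F V φ x

/-- A frame validates a formula φ if every world in every model on it forces φ. -/
def ValidForm (F : CKFrame) (φ : Form) : Prop :=
  ∀ (V : Val F) (x : F.W), Forces F V φ x

/-- Γ semantically entails φ on a class 𝓕 of CK-frames. -/
def SemEntails (𝓕 : Set CKFrame) (Γ : Set Form) (φ : Form) : Prop :=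
  ∀ F ∈ 𝓕, ValidConseq F Γ φ

/-- A theory: a deductively closed set of formulas. -/
def Theory (Ax : Set Form) (Γ : Set Form) : Prop := ∀ φ : Form, Prv Ax Γ φ → φ ∈ Γ

/-- A set of formulas is prime if φ∨ψ ∈ Γ implies φ ∈ Γ or ψ ∈ Γ. -/
def PrimeSet (Γ : Set Form) : Prop := ∀ φ ψ : Form, φ.or ψ ∈ Γ → φ ∈ Γ ∨ ψ ∈ Γ

/-- A prime theory (possibly inconsistent). -/
def PrimeTheory (Ax : Set Form) (Γ : Set Form) : Prop := Theory Ax Γ ∧ PrimeSet Γ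

/-- (Γ, U) is a segment: Γ is a prime theory, U a set of prime theories,
□φ ∈ Γ implies φ ∈ Δ for all Δ ∈ U, and ◇φ ∈ Γ implies φ ∈ Δ for some Δ ∈ U. -/
def IsSegment (Ax : Set Form) (Γ : Set Form) (U : Set (Set Form)) : Prop :=
  PrimeTheory Ax Γ ∧ (∀ Δ ∈ U, PrimeTheory Ax Δ) ∧
  (∀ φ : Form, φ.box ∈ Γ → ∀ Δ ∈ U, φ ∈ Δ) ∧
  (∀ φ : Form, φ.dia ∈ Γ → ∃ Δ ∈ U, φ ∈ Δ)

/-- Segments, the worlds of the canonical model of CK ⊕ Ax. -/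
structure Segment (Ax : Set Form) where
  hd : Set Form
  tl : Set (Set Form)
  seg : IsSegment Ax hd tl

theorem Segment.ext' {Ax : Set Form} :
    ∀ {s t : Segment Ax}, s.hd = t.hd → s.tl = t.tl → s = t
  | ⟨_, _, _⟩, ⟨_, _, _⟩, rfl, rfl => rfl

theorem theory_bot_eq_univ {Ax : Set Form} {Δ : Set Form} (hΔ : Theory Ax Δ)
    (hbot : Form.bot ∈ Δ) : Δ = Set.univ := by
  ext φ
  simp only [Set.mem_univ, iff_true]
  exact hΔ φ (Prv.mp (Prv.el hbot) (Prv.ax (Or.inl (IPLAx.a9 φ))))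

theorem univ_primeTheory (Ax : Set Form) : PrimeTheory Ax Set.univ :=
  ⟨fun _ _ => Set.mem_univ _, fun φ _ _ => Or.inl (Set.mem_univ φ)⟩

/-- The exploding segment (L, {L}). -/
def explSeg (Ax : Set Form) : Segment Ax where
  hd := Set.univ
  tl := {Set.univ}
  seg := by
    refine ⟨univ_primeTheory Ax, ?_, ?_, ?_⟩
    · intro Δ hΔ
      rw [Set.mem_singleton_iff] at hΔ
      subst hΔ
      exact univ_primeTheory Ax
    · intro φ _ Δ hΔ
      rw [Set.mem_singleton_iff] at hΔ
      subst hΔ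
      exact Set.mem_univ φ
    · intro φ _
      exact ⟨Set.univ, rfl, Set.mem_univ φ⟩

theorem seg_univ_tl {Ax : Set Form} (s : Segment Ax) (h : s.hd = Set.univ) :
    s.tl = {Set.univ} := by
  obtain ⟨_, htl, hbox, hdia⟩ := s.seg
  ext Δ
  simp only [Set.mem_singleton_iff]
  constructor
  · intro hΔ
    have hb : Form.bot.box ∈ s.hd := by rw [h]; exact Set.mem_univ _
    exact theory_bot_eq_univ (htl Δ hΔ).1 (hbox Form.bot hb Δ hΔ)
  · intro hΔ
    subst hΔ
    have hd : Form.bot.dia ∈ s.hd := by rw [h]; exact Set.mem_univ _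
    obtain ⟨Δ', hΔ', hbot⟩ := hdia Form.bot hd
    have := theory_bot_eq_univ (htl Δ' hΔ').1 hbot
    rwa [this] at hΔ'

/-- The canonical frame of CK ⊕ Ax: all segments, ordered by inclusion of
heads, with (Γ,U) R (Γ',U') iff Γ' ∈ U, and exploding world (L, {L}). -/
def canonFrame (Ax : Set Form) : CKFrame where
  W := Segment Ax
  le s t := s.hd ⊆ t.hd
  R s t := t.hd ∈ s.tl
  e := explSeg Ax
  le_refl _ := subset_rfl
  le_trans h1 h2 := h1.trans h2
  e_max := by
    intro s h
    have hhd : s.hd = Set.univ := Set.univ_subset_iff.mp h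
    exact Segment.ext' hhd (seg_univ_tl s hhd)
  e_R := by
    intro s
    constructor
    · intro h
      have hhd : s.hd = Set.univ := h
      exact Segment.ext' hhd (seg_univ_tl s hhd)
    · intro h
      subst h
      rfl

/-- The canonical valuation V(p) = { (Γ,U) : p ∈ Γ }. -/
def canonVal (Ax : Set Form) : Val (canonFrame Ax) where
  V p s := Form.var p ∈ s.hd
  mono := by intro p x y h hp; exact h hp
  at_e := by intro p; exact Set.mem_univ _


section Aux

theorem Prv.weaken {Ax : Set Form} {Γ Δ : Set Form} {φ : Form}
    (h : Prv Ax Γ φ) (hs : Γ ⊆ Δ) : Prv Ax Δ φ := by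
  induction h generalizing Δ with
  | ax h => exact Prv.ax h
  | mp _ _ ih1 ih2 => exact Prv.mp (ih1 hs) (ih2 hs)
  | nec h => exact Prv.nec h
  | el h => exact Prv.el (hs h)

theorem Prv.ipl {Ax : Set Form} {Γ : Set Form} {φ : Form} (h : IPLAx φ) : Prv Ax Γ φ :=
  Prv.ax (Or.inl h)

theorem Prv.imp_self {Ax : Set Form} {Γ : Set Form} (φ : Form) : Prv Ax Γ (φ.imp φ) := by
  have h1 := Prv.ipl (Ax := Ax) (Γ := Γ) (IPLAx.a2 φ (φ.imp φ) φ)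
  have h2 := Prv.ipl (Ax := Ax) (Γ := Γ) (IPLAx.a1 φ (φ.imp φ))
  have h3 := Prv.ipl (Ax := Ax) (Γ := Γ) (IPLAx.a1 φ φ)
  exact Prv.mp h3 (Prv.mp h2 h1)

theorem Prv.deduction {Ax : Set Form} {Γ : Set Form} {φ ψ : Form}
    (h : Prv Ax (insert φ Γ) ψ) : Prv Ax Γ (φ.imp ψ) := by
  generalize hΔ : insert φ Γ = Δ at h
  induction h generalizing Γ with
  | ax h => exact Prv.mp (Prv.ax h) (Prv.ipl (IPLAx.a1 _ φ))
  | mp _ _ ih1 ih2 =>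
      exact Prv.mp (ih1 hΔ) (Prv.mp (ih2 hΔ) (Prv.ipl (IPLAx.a2 _ _ _)))
  | nec h => exact Prv.mp (Prv.nec h) (Prv.ipl (IPLAx.a1 _ φ))
  | el h =>
      subst hΔ
      rcases h with h | h
      · subst h; exact Prv.imp_self _
      · exact Prv.mp (Prv.el h) (Prv.ipl (IPLAx.a1 _ φ))

theorem Prv.compact {Ax : Set Form} {Γ : Set Form} {φ : Form}
    (h : Prv Ax Γ φ) : ∃ Δ : Set Form, Δ.Finite ∧ Δ ⊆ Γ ∧ Prv Ax Δ φ := by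
  induction h with
  | ax h => exact ⟨∅, Set.finite_empty, Set.empty_subset _, Prv.ax h⟩
  | mp _ _ ih1 ih2 =>
      obtain ⟨Δ1, hf1, hs1, hp1⟩ := ih1
      obtain ⟨Δ2, hf2, hs2, hp2⟩ := ih2
      exact ⟨Δ1 ∪ Δ2, hf1.union hf2, Set.union_subset hs1 hs2,
        Prv.mp (hp1.weaken Set.subset_union_left) (hp2.weaken Set.subset_union_right)⟩
  | nec h => exact ⟨∅, Set.finite_empty, Set.empty_subset _, Prv.nec h⟩
  | el h => exact ⟨{_}, Set.finite_singleton _, Set.singleton_subset_iff.mpr h, Prv.el rfl⟩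

theorem Prv.boxify {Ax : Set Form} {Γ : Set Form} {φ : Form}
    (h : Prv Ax Γ φ) : Prv Ax (Form.box '' Γ) φ.box := by
  induction h with
  | ax h => exact Prv.nec (Prv.ax h)
  | @mp _ χ ψ _ _ ih1 ih2 =>
      exact Prv.mp ih1 (Prv.mp ih2 (Prv.ax (Or.inr (Or.inl ⟨χ, ψ, rfl⟩))))
  | nec h => exact Prv.nec (Prv.nec h)
  | el h => exact Prv.el ⟨_, h, rfl⟩

theorem chain_finite_subset {α : Type*} {c : Set (Set α)} (hchain : IsChain (· ⊆ ·) c)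
    (hcne : c.Nonempty) {Δ : Set α} (hfin : Δ.Finite) (hsub : Δ ⊆ ⋃₀ c) :
    ∃ t ∈ c, Δ ⊆ t := by
  refine Set.Finite.induction_on (motive := fun Δ _ => Δ ⊆ ⋃₀ c → ∃ t ∈ c, Δ ⊆ t) Δ hfin
    (fun _ => ?_) ?_ hsub
  · obtain ⟨t, ht⟩ := hcne; exact ⟨t, ht, Set.empty_subset _⟩
  · intro a Δ' _ _ ih hsub'
    obtain ⟨t, htc, hts⟩ := ih (fun x hx => hsub' (Set.mem_insert_of_mem _ hx))
    obtain ⟨u, huc, hau⟩ := hsub' (Set.mem_insert a Δ')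
    rcases hchain.total htc huc with h' | h'
    · exact ⟨u, huc, Set.insert_subset hau (hts.trans h')⟩
    · exact ⟨t, htc, Set.insert_subset (h' hau) hts⟩

theorem lindenbaum {Ax : Set Form} {Γ : Set Form} {φ : Form}
    (h : ¬ Prv Ax Γ φ) : ∃ Γ' : Set Form, Γ ⊆ Γ' ∧ PrimeTheory Ax Γ' ∧ φ ∉ Γ' := by
  have hz : ∀ c ⊆ {Δ : Set Form | ¬ Prv Ax Δ φ}, IsChain (· ⊆ ·) c → c.Nonempty →
      ∃ ub ∈ {Δ : Set Form | ¬ Prv Ax Δ φ}, ∀ s ∈ c, s ⊆ ub := by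
    intro c hcS hchain hcne
    refine ⟨⋃₀ c, ?_, fun s hs => Set.subset_sUnion_of_mem hs⟩
    intro hprv
    obtain ⟨Δ, hfin, hsub, hp⟩ := hprv.compact
    obtain ⟨t, htc, hts⟩ := chain_finite_subset hchain hcne hfin hsub
    exact hcS htc (hp.weaken hts)
  obtain ⟨m, hGm, hm⟩ := zorn_subset_nonempty {Δ : Set Form | ¬ Prv Ax Δ φ} hz Γ h
  have hmS : ¬ Prv Ax m φ := hm.prop
  have hthy : Theory Ax m := by
    intro ψ hψ
    by_contra hne
    have : Prv Ax (insert ψ m) φ := by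
      by_contra hc
      exact hne (hm.mem_of_prop_insert hc)
    exact hmS (Prv.mp hψ this.deduction)
  refine ⟨m, hGm, ⟨hthy, ?_⟩, fun hφ => hmS (Prv.el hφ)⟩
  intro α β hor
  by_contra hc
  push_neg at hc
  have hα : Prv Ax (insert α m) φ := by
    by_contra h'; exact hc.1 (hm.mem_of_prop_insert h')
  have hβ : Prv Ax (insert β m) φ := by
    by_contra h'; exact hc.2 (hm.mem_of_prop_insert h')
  exact hmS (Prv.mp (Prv.el hor)
    (Prv.mp hβ.deduction (Prv.mp hα.deduction (Prv.ipl (IPLAx.a8 α β φ)))))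

/-- The segment (Γ, {univ}) on any prime theory Γ. -/
def segOf {Ax : Set Form} (Γ : Set Form) (h : PrimeTheory Ax Γ) : Segment Ax where
  hd := Γ
  tl := {Set.univ}
  seg := by
    refine ⟨h, ?_, ?_, ?_⟩
    · intro Δ hΔ
      rw [Set.mem_singleton_iff] at hΔ; subst hΔ
      exact univ_primeTheory Ax
    · intro φ _ Δ hΔ
      rw [Set.mem_singleton_iff] at hΔ; subst hΔ
      exact Set.mem_univ φ
    · intro φ _
      exact ⟨Set.univ, rfl, Set.mem_univ φ⟩

theorem boxInv_image_subset {Γ : Set Form} :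
    Form.box '' {χ | χ.box ∈ Γ} ⊆ Γ := by
  rintro _ ⟨χ, hχ, rfl⟩; exact hχ

end Aux

/-- Truth lemma for the canonical segment model: a segment forces φ iff
φ belongs to its head. -/
theorem truth_lemma (Ax : Set Form) (s : Segment Ax) (φ : Form) :
    Forces (canonFrame Ax) (canonVal Ax) φ s ↔ φ ∈ s.hd := by
  induction φ generalizing s with
  | var p => exact Iff.rfl
  | bot =>
      constructor
      · intro h
        have h' : s = explSeg Ax := h
        rw [h']
        exact Set.mem_univ _
      · intro h
        have hu : s.hd = Set.univ := theory_bot_eq_univ s.seg.1.1 h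
        exact Segment.ext' hu (seg_univ_tl s hu)
  | and a b ih1 ih2 =>
      constructor
      · rintro ⟨ha, hb⟩
        exact s.seg.1.1 _ (Prv.mp (Prv.el ((ih2 s).mp hb))
          (Prv.mp (Prv.el ((ih1 s).mp ha)) (Prv.ipl (IPLAx.a5 a b))))
      · intro h
        exact ⟨(ih1 s).mpr (s.seg.1.1 _ (Prv.mp (Prv.el h) (Prv.ipl (IPLAx.a3 a b)))),
          (ih2 s).mpr (s.seg.1.1 _ (Prv.mp (Prv.el h) (Prv.ipl (IPLAx.a4 a b))))⟩
  | or a b ih1 ih2 =>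
      constructor
      · rintro (ha | hb)
        · exact s.seg.1.1 _ (Prv.mp (Prv.el ((ih1 s).mp ha)) (Prv.ipl (IPLAx.a6 a b)))
        · exact s.seg.1.1 _ (Prv.mp (Prv.el ((ih2 s).mp hb)) (Prv.ipl (IPLAx.a7 a b)))
      · intro h
        rcases s.seg.1.2 a b h with h' | h'
        · exact Or.inl ((ih1 s).mpr h')
        · exact Or.inr ((ih2 s).mpr h')
  | imp a b ih1 ih2 =>
      constructor
      · intro h
        by_contra hn
        have hnp : ¬ Prv Ax (insert a s.hd) b := by
          intro hp
          exact hn (s.seg.1.1 _ hp.deduction)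
        obtain ⟨Γ', hsub, hΓ', hbn⟩ := lindenbaum hnp
        have hforce := h (segOf Γ' hΓ')
          (fun x hx => hsub (Set.mem_insert_of_mem _ hx))
          ((ih1 (segOf Γ' hΓ')).mpr (hsub (Set.mem_insert _ _)))
        exact hbn ((ih2 (segOf Γ' hΓ')).mp hforce)
      · intro h y hle hfa
        have hab : a.imp b ∈ y.hd := hle h
        exact (ih2 y).mpr (y.seg.1.1 _ (Prv.mp (Prv.el ((ih1 y).mp hfa)) (Prv.el hab)))
  | box a ih =>
      constructor
      · intro h
        by_contra hn
        have hnp : ¬ Prv Ax {χ | χ.box ∈ s.hd} a := by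
          intro hp
          exact hn (s.seg.1.1 _ (hp.boxify.weaken boxInv_image_subset))
        obtain ⟨Δ, hsub, hΔ, han⟩ := lindenbaum hnp
        have hseg : IsSegment Ax s.hd (insert Δ s.tl) := by
          refine ⟨s.seg.1, ?_, ?_, ?_⟩
          · rintro Δ' (rfl | hΔ')
            · exact hΔ
            · exact s.seg.2.1 Δ' hΔ'
          · rintro φ hφ Δ' (rfl | hΔ')
            · exact hsub hφ
            · exact s.seg.2.2.1 φ hφ Δ' hΔ'
          · intro φ hφ
            obtain ⟨Δ', hΔ', h'⟩ := s.seg.2.2.2 φ hφ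
            exact ⟨Δ', Set.mem_insert_of_mem _ hΔ', h'⟩
        set y : Segment Ax := ⟨s.hd, insert Δ s.tl, hseg⟩
        have hforce := h y (segOf Δ hΔ) (subset_rfl) (Set.mem_insert _ _)
        exact han ((ih (segOf Δ hΔ)).mp hforce)
      · intro h y z hle hR
        exact (ih z).mpr (y.seg.2.2.1 a (hle h) z.hd hR)
  | dia a ih =>
      constructor
      · intro h
        by_contra hn
        have hseg : IsSegment Ax s.hd
            {Δ | PrimeTheory Ax Δ ∧ {χ | χ.box ∈ s.hd} ⊆ Δ ∧ a ∉ Δ} := by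
          refine ⟨s.seg.1, fun Δ hΔ => hΔ.1, fun φ hφ Δ hΔ => hΔ.2.1 hφ, ?_⟩
          intro ψ hψ
          have hnp : ¬ Prv Ax (insert ψ {χ | χ.box ∈ s.hd}) a := by
            intro hp
            have hbx : Prv Ax s.hd (ψ.imp a).box :=
              hp.deduction.boxify.weaken boxInv_image_subset
            have : Prv Ax s.hd a.dia :=
              Prv.mp (Prv.el hψ) (Prv.mp hbx (Prv.ax (Or.inr (Or.inr (Or.inl ⟨ψ, a, rfl⟩)))))
            exact hn (s.seg.1.1 _ this)
          obtain ⟨Δ, hsub, hΔ, han⟩ := lindenbaum hnp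
          exact ⟨Δ, ⟨hΔ, fun x hx => hsub (Set.mem_insert_of_mem _ hx), han⟩,
            hsub (Set.mem_insert _ _)⟩
        set y : Segment Ax := ⟨s.hd, _, hseg⟩
        obtain ⟨z, hz, hforce⟩ := h y subset_rfl
        exact hz.2.2 ((ih z).mp hforce)
      · intro h y hle
        obtain ⟨Δ, hΔU, haΔ⟩ := y.seg.2.2.2 a (hle h)
        exact ⟨segOf Δ (y.seg.2.1 Δ hΔU), hΔU, (ih (segOf Δ (y.seg.2.1 Δ hΔU))).mpr haΔ⟩
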